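/- Under the smoothed intervention with hazards: 0→1 hazard α̃01 (supported on (u*−b, u*+b) with density g̃), 0→2 hazard α02, 1→2 hazard α12(·|u), the interventional risk for t < u*−b equals ψₜ⁻ = ∫₀ᵗ exp(−A02(s)) dA02(s) = 1 − exp(−A02(t)); and for t ≥ u*−b it equals ψₜ⁺ = ψ⁻_{u*−b} + μₜ + ηₜ, where μₜ = (1/c*) ∫ 1{u*−b < u < t∧(u*+b)} H01*(u) exp(−A02(u)) dA02(u) with H01*(u) = ∫ᵤ^{u*+b} g(v) dv, and ηₜ = (1/c*) ∫ 1{u*−b < u < t∧(u*+b)} (1 − S1(t|u)) S0(u) α01(u) du with S0(u) = exp(−A01(u) − A02(u)) and S1(t|u) = exp(−∫ᵤᵗ α12(v|u) dv). That is, substituting α̃01 for α01 in the general illness-death risk formula yields this decomposition. -/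

import Mathlib

open MeasureTheory Real intervalIntegral

private lemma II_congr' {a b : ℝ} {f h : ℝ → ℝ}
    (hh : IntervalIntegrable h volume a b)
    (hae : ∀ᵐ x : ℝ, x ∈ Set.uIoc a b → f x = h x) :
    IntervalIntegrable f volume a b := by
  refine hh.congr_ae ((MeasureTheory.ae_restrict_iff' measurableSet_uIoc).2 ?_)
  filter_upwards [hae] with x hx hxm
  exact (hx hxm).symm

/-- Under the smoothed intervention (0→1 transition-time density
`g̃` on the window `(u₋*, u₊*)`, so the intervened "no-transition-yet"
probability is `S̃01(u) = 1` before the window, `H01*(u)/c*` in the window, `0`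
after; 0→2 hazard `α02`; 1→2 hazard `α12(·|u)`), the interventional risk
`ψₜ = ∫₀ᵗ S̃01(u) e^{-A02(u)} α02(u) du + ∫₀ᵗ g̃(u) e^{-A02(u)} (1-S1(t|u)) du`
satisfies `ψₜ = ψₜ⁻ = 1 - e^{-A02(t)}` for `t < u₋*` and
`ψₜ = ψ⁻_{u₋*} + μₜ + ηₜ` for `t ≥ u₋*`, with
`μₜ = (1/c*) ∫ 1{u₋*<u<t∧u₊*} H01*(u) e^{-A02(u)} dA02(u)` and
`ηₜ = (1/c*) ∫ 1{u₋*<u<t∧u₊*} (1-S1(t|u)) S0(u) α01(u) du`. -/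
theorem stmt7
    (τ um up : ℝ) (h0um : 0 ≤ um) (humup : um < up) (hupτ : up ≤ τ)
    (α01 α02 : ℝ → ℝ) (α12 : ℝ → ℝ → ℝ)  -- `α12 v u` stands for `α12(v|u)`
    (hc01 : Continuous α01) (hc02 : Continuous α02)
    (hc12 : Continuous fun p : ℝ × ℝ => α12 p.1 p.2)
    (hn01 : ∀ s, 0 ≤ α01 s) (hn02 : ∀ s, 0 ≤ α02 s) (hn12 : ∀ v u, 0 ≤ α12 v u)
    (hpos : ∀ u ∈ Set.Icc um up, 0 < α01 u)
    (A01 A02 : ℝ → ℝ)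
    (hA01 : ∀ u, A01 u = ∫ s in (0:ℝ)..u, α01 s)
    (hA02 : ∀ u, A02 u = ∫ s in (0:ℝ)..u, α02 s)
    (g : ℝ → ℝ) (hg : ∀ u, g u = α01 u * Real.exp (-A01 u))
    (c : ℝ) (hc : c = ∫ u in um..up, g u)
    (H01 : ℝ → ℝ) (hH01 : ∀ u, H01 u = ∫ v in u..up, g v)
    (S01t : ℝ → ℝ)
    (hS01t : ∀ u, S01t u = if u ≤ um then 1 else if u < up then H01 u / c else 0)
    (gt : ℝ → ℝ)
    (hgt : ∀ u, gt u = if um < u ∧ u < up then g u / c else 0)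
    (S0 : ℝ → ℝ) (hS0 : ∀ u, S0 u = Real.exp (-(A01 u + A02 u)))
    (S1 : ℝ → ℝ → ℝ)
    (hS1 : ∀ t u, S1 t u = Real.exp (-(∫ v in u..t, α12 v u)))
    (μ η : ℝ → ℝ)
    (hμ : ∀ t, μ t = (1 / c) *
      ∫ u in um..(min t up), H01 u * Real.exp (-A02 u) * α02 u)
    (hη : ∀ t, η t = (1 / c) *
      ∫ u in um..(min t up), (1 - S1 t u) * S0 u * α01 u)
    (ψ : ℝ → ℝ)
    (hψ : ∀ t, ψ t = (∫ u in (0:ℝ)..t, S01t u * Real.exp (-A02 u) * α02 u)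
      + ∫ u in (0:ℝ)..t, gt u * Real.exp (-A02 u) * (1 - S1 t u)) :
    (∀ t ∈ Set.Icc (0:ℝ) τ, t < um → ψ t = 1 - Real.exp (-A02 t)) ∧
    (∀ t ∈ Set.Icc (0:ℝ) τ, um ≤ t →
      ψ t = (1 - Real.exp (-A02 um)) + μ t + η t) := by
  -- continuity facts
  have hcA01 : Continuous A01 := by
    rw [funext hA01]
    exact intervalIntegral.continuous_primitive (fun a b => hc01.intervalIntegrable a b) 0
  have hcA02 : Continuous A02 := by
    rw [funext hA02]
    exact intervalIntegral.continuous_primitive (fun a b => hc02.intervalIntegrable a b) 0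
  have hcg : Continuous g := by
    rw [funext hg]
    exact hc01.mul (Real.continuous_exp.comp hcA01.neg)
  have hcH01 : Continuous H01 := by
    rw [funext hH01]
    have hsym : (fun u => ∫ v in u..up, g v) = fun u => -∫ v in up..u, g v :=
      funext fun u => intervalIntegral.integral_symm up u
    rw [hsym]
    exact (intervalIntegral.continuous_primitive (fun a b => hcg.intervalIntegrable a b) up).neg
  have hE02 : Continuous fun u => Real.exp (-A02 u) := Real.continuous_exp.comp hcA02.neg
  have hcS0 : Continuous S0 := by
    rw [funext hS0]
    exact Real.continuous_exp.comp (hcA01.add hcA02).neg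
  have hcS1 : ∀ t, Continuous fun u => S1 t u := by
    intro t
    have h12 : Continuous (Function.uncurry fun u v => α12 v u) :=
      hc12.comp (continuous_snd.prodMk continuous_fst)
    have hpar : Continuous fun u => ∫ v in t..u, α12 v u :=
      intervalIntegral.continuous_parametric_intervalIntegral_of_continuous h12 continuous_id
    have heq : (fun u => S1 t u) = fun u => Real.exp (-(-(∫ v in t..u, α12 v u))) := by
      funext u
      rw [hS1, intervalIntegral.integral_symm t u]
    rw [heq]
    exact Real.continuous_exp.comp hpar.neg.neg
  -- A02 0 = 0
  have hA020 : A02 0 = 0 := by rw [hA02]; simp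
  -- FTC
  have hder : ∀ u : ℝ, HasDerivAt (fun s => -Real.exp (-A02 s))
      (Real.exp (-A02 u) * α02 u) u := by
    intro u
    have h1 : HasDerivAt A02 (α02 u) u := by
      have h := intervalIntegral.integral_hasDerivAt_right (hc02.intervalIntegrable 0 u)
        (hc02.stronglyMeasurable.stronglyMeasurableAtFilter) hc02.continuousAt
      have : A02 = fun v => ∫ s in (0:ℝ)..v, α02 s := funext hA02
      rw [this]
      exact h
    have h2 : HasDerivAt (fun s => Real.exp (-A02 s)) (Real.exp (-A02 u) * -α02 u) u :=
      h1.neg.exp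
    have h3 := h2.neg
    simpa [mul_neg, neg_neg, Pi.neg_def] using h3
  have hkey : ∀ a b : ℝ, (∫ u in a..b, Real.exp (-A02 u) * α02 u)
      = Real.exp (-A02 a) - Real.exp (-A02 b) := by
    intro a b
    have h := intervalIntegral.integral_eq_sub_of_hasDerivAt
      (f := fun s => -Real.exp (-A02 s)) (fun x _ => hder x)
      ((hE02.mul hc02).intervalIntegrable a b)
    rw [h]; ring
  -- c > 0
  have hcne : c ≠ 0 := by
    have hgpos : ∀ u ∈ Set.Ioo um up, 0 < g u := fun u hu => by
      rw [hg]
      exact mul_pos (hpos u ⟨hu.1.le, hu.2.le⟩) (Real.exp_pos _)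
    have : 0 < c := by
      rw [hc]
      exact intervalIntegral.intervalIntegral_pos_of_pos_on
        (hcg.intervalIntegrable um up) hgpos humup
    exact ne_of_gt this
  have hH01um : H01 um = c := by rw [hH01, hc]
  have hH01up : H01 up = 0 := by rw [hH01]; simp
  constructor
  · -- case t < um
    intro t ht htum
    rw [hψ]
    have e1 : (∫ u in (0:ℝ)..t, S01t u * Real.exp (-A02 u) * α02 u)
        = ∫ u in (0:ℝ)..t, Real.exp (-A02 u) * α02 u := by
      apply intervalIntegral.integral_congr
      intro u hu
      rw [Set.uIcc_of_le ht.1] at hu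
      show S01t u * Real.exp (-A02 u) * α02 u = Real.exp (-A02 u) * α02 u
      rw [hS01t, if_pos (hu.2.trans htum.le), one_mul]
    have e2 : (∫ u in (0:ℝ)..t, gt u * Real.exp (-A02 u) * (1 - S1 t u)) = 0 := by
      have h : (∫ u in (0:ℝ)..t, gt u * Real.exp (-A02 u) * (1 - S1 t u))
          = ∫ _ in (0:ℝ)..t, (0:ℝ) := by
        apply intervalIntegral.integral_congr
        intro u hu
        rw [Set.uIcc_of_le ht.1] at hu
        have h' : ¬ (um < u ∧ u < up) := fun hcon => absurd hcon.1 (not_lt.2 (hu.2.trans htum.le))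
        show gt u * Real.exp (-A02 u) * (1 - S1 t u) = 0
        rw [hgt, if_neg h']
        ring
      rw [h]; simp
    rw [e1, e2, hkey, hA020]
    simp
  · -- case um ≤ t
    intro t ht htum
    have hm1 : min t up ≤ t := min_le_left _ _
    have hum_m : um ≤ min t up := le_min htum humup.le
    -- Piece (1a): ∫ 0..um of first integrand
    have e1a : ∀ᵐ x : ℝ, x ∈ Set.uIoc 0 um →
        S01t x * Real.exp (-A02 x) * α02 x = Real.exp (-A02 x) * α02 x := by
      refine Filter.Eventually.of_forall fun u hu => ?_
      rw [Set.uIoc_of_le h0um] at hu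
      rw [hS01t, if_pos hu.2, one_mul]
    have iia : IntervalIntegrable (fun u => S01t u * Real.exp (-A02 u) * α02 u)
        volume 0 um := II_congr' ((hE02.mul hc02).intervalIntegrable 0 um) e1a
    have I1a : (∫ u in (0:ℝ)..um, S01t u * Real.exp (-A02 u) * α02 u)
        = 1 - Real.exp (-A02 um) := by
      rw [intervalIntegral.integral_congr_ae e1a, hkey, hA020]
      simp
    -- Piece (1b): ∫ um..min t up of first integrand
    have e1b : ∀ᵐ x : ℝ, x ∈ Set.uIoc um (min t up) →
        S01t x * Real.exp (-A02 x) * α02 x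
          = (1 / c) * (H01 x * Real.exp (-A02 x) * α02 x) := by
      refine Filter.Eventually.of_forall fun u hu => ?_
      rw [Set.uIoc_of_le hum_m] at hu
      have hup' : u ≤ up := hu.2.trans (min_le_right _ _)
      have hS : S01t u = H01 u / c := by
        rw [hS01t, if_neg (not_le.2 hu.1)]
        rcases lt_or_eq_of_le hup' with h | h
        · rw [if_pos h]
        · rw [if_neg (by rw [h]; exact lt_irrefl up), h, hH01up, zero_div]
      rw [hS]; ring
    have iib : IntervalIntegrable (fun u => S01t u * Real.exp (-A02 u) * α02 u)
        volume um (min t up) :=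
      II_congr' ((continuous_const.mul ((hcH01.mul hE02).mul hc02)).intervalIntegrable
        um (min t up)) e1b
    have I1b : (∫ u in um..(min t up), S01t u * Real.exp (-A02 u) * α02 u) = μ t := by
      rw [intervalIntegral.integral_congr_ae e1b, intervalIntegral.integral_const_mul, hμ]
    -- Piece (1c): ∫ min t up..t of first integrand
    have e1c : ∀ᵐ x : ℝ, x ∈ Set.uIoc (min t up) t →
        S01t x * Real.exp (-A02 x) * α02 x = 0 := by
      refine Filter.Eventually.of_forall fun u hu => ?_
      rw [Set.uIoc_of_le hm1] at hu
      have hupu : up ≤ u := by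
        rcases le_or_gt t up with h | h
        · exact absurd hu.1 (by rw [min_eq_left h]; exact not_lt.2 hu.2)
        · rw [min_eq_right h.le] at hu; exact hu.1.le
      rw [hS01t, if_neg (not_le.2 (lt_of_lt_of_le humup hupu)),
        if_neg (not_lt.2 hupu)]
      ring
    have iic : IntervalIntegrable (fun u => S01t u * Real.exp (-A02 u) * α02 u)
        volume (min t up) t :=
      II_congr' (_root_.intervalIntegrable_const (c := (0:ℝ))) e1c
    have I1c : (∫ u in (min t up)..t, S01t u * Real.exp (-A02 u) * α02 u) = 0 := by
      rw [intervalIntegral.integral_congr_ae e1c]; simp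
    -- Piece (2a): ∫ 0..um of second integrand
    have e2a : ∀ᵐ x : ℝ, x ∈ Set.uIoc 0 um →
        gt x * Real.exp (-A02 x) * (1 - S1 t x) = 0 := by
      refine Filter.Eventually.of_forall fun u hu => ?_
      rw [Set.uIoc_of_le h0um] at hu
      rw [hgt, if_neg (fun hcon => absurd hcon.1 (not_lt.2 hu.2))]
      ring
    have jja : IntervalIntegrable (fun u => gt u * Real.exp (-A02 u) * (1 - S1 t u))
        volume 0 um := II_congr' (_root_.intervalIntegrable_const (c := (0:ℝ))) e2a
    have I2a : (∫ u in (0:ℝ)..um, gt u * Real.exp (-A02 u) * (1 - S1 t u)) = 0 := by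
      rw [intervalIntegral.integral_congr_ae e2a]; simp
    -- Piece (2b): ∫ um..min t up of second integrand
    have hupae : ∀ᵐ x : ℝ, x ≠ up := by
      rw [MeasureTheory.ae_iff]
      simp only [ne_eq, not_not, Set.setOf_eq_eq_singleton]
      exact measure_singleton up
    have e2b : ∀ᵐ x : ℝ, x ∈ Set.uIoc um (min t up) →
        gt x * Real.exp (-A02 x) * (1 - S1 t x)
          = (1 / c) * ((1 - S1 t x) * S0 x * α01 x) := by
      filter_upwards [hupae] with u hune hu
      rw [Set.uIoc_of_le hum_m] at hu
      have hu_up : u < up := lt_of_le_of_ne (hu.2.trans (min_le_right _ _)) hune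
      rw [hgt, if_pos ⟨hu.1, hu_up⟩, hg, hS0, neg_add, Real.exp_add]
      ring
    have jjb : IntervalIntegrable (fun u => gt u * Real.exp (-A02 u) * (1 - S1 t u))
        volume um (min t up) :=
      II_congr' ((continuous_const.mul
        ((((continuous_const.sub (hcS1 t)).mul hcS0).mul hc01))).intervalIntegrable
        um (min t up)) e2b
    have I2b : (∫ u in um..(min t up), gt u * Real.exp (-A02 u) * (1 - S1 t u)) = η t := by
      rw [intervalIntegral.integral_congr_ae e2b, intervalIntegral.integral_const_mul, hη]
    -- Piece (2c): ∫ min t up..t of second integrand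
    have e2c : ∀ᵐ x : ℝ, x ∈ Set.uIoc (min t up) t →
        gt x * Real.exp (-A02 x) * (1 - S1 t x) = 0 := by
      refine Filter.Eventually.of_forall fun u hu => ?_
      rw [Set.uIoc_of_le hm1] at hu
      have hupu : up ≤ u := by
        rcases le_or_gt t up with h | h
        · exact absurd hu.1 (by rw [min_eq_left h]; exact not_lt.2 hu.2)
        · rw [min_eq_right h.le] at hu; exact hu.1.le
      rw [hgt, if_neg (fun hcon => absurd hcon.2 (not_lt.2 hupu))]
      ring
    have jjc : IntervalIntegrable (fun u => gt u * Real.exp (-A02 u) * (1 - S1 t u))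
        volume (min t up) t :=
      II_congr' (_root_.intervalIntegrable_const (c := (0:ℝ))) e2c
    have I2c : (∫ u in (min t up)..t, gt u * Real.exp (-A02 u) * (1 - S1 t u)) = 0 := by
      rw [intervalIntegral.integral_congr_ae e2c]; simp
    -- assemble
    rw [hψ t,
      ← intervalIntegral.integral_add_adjacent_intervals iia (iib.trans iic),
      ← intervalIntegral.integral_add_adjacent_intervals iib iic,
      ← intervalIntegral.integral_add_adjacent_intervals jja (jjb.trans jjc),
      ← intervalIntegral.integral_add_adjacent_intervals jjb jjc,
      I1a, I1b, I1c, I2a, I2b, I2c]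
    ring
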